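/- The element X_2 = 2h_2 − h_1h_1 is annihilated by every shifted quasi-symmetric function θ_α (α any composition with α_1 > 1 if |α| > 1), under the pairing M_α(S^β) = δ_{αβ}. -/

import Mathlib

open scoped Classical

noncomputable section

/-- `RefinesL fine coarse` : the composition `fine` refines `coarse`. -/
def RefinesL (fine coarse : List ℕ) : Prop :=
  ∃ L : List (List ℕ), [] ∉ L ∧ L.map List.sum = coarse ∧ L.flatten = fine

/-- `β*`: replace every part `β_i > 1` of `β` other than the first by the pair `(1, β_i − 1)`. -/
def starC : List ℕ → List ℕ
  | [] => []
  | a :: rest => a :: rest.flatMap (fun b => if 1 < b then [1, b - 1] else [b])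

/-- The pairing `θ_α(S^δ)`: the coefficient of `M_δ` in `θ_α = ∑_{β* ≼ α} 2^{k(β)} M_β`,
under the duality in which `{M_α}` is dual to `{S^α}`. -/
def θpair (α δ : List ℕ) : ℤ :=
  if RefinesL (starC δ) α then 2 ^ δ.length else 0

lemma flatten_eq_nil {L : List (List ℕ)} (h : [] ∉ L) (hf : L.flatten = []) : L = [] := by
  cases L with
  | nil => rfl
  | cons l L' =>
    simp only [List.flatten_cons, List.append_eq_nil_iff] at hf
    exact absurd ((List.mem_cons_self : l ∈ l :: L')) (by rw [hf.1] at h ⊢; exact h)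

lemma flatten_eq_single {L : List (List ℕ)} {a : ℕ} (h : [] ∉ L)
    (hf : L.flatten = [a]) : L = [[a]] := by
  cases L with
  | nil => simp at hf
  | cons l L' =>
    have hl : l ≠ [] := fun hnil => h (hnil ▸ (List.mem_cons_self : l ∈ l :: L'))
    cases l with
    | nil => exact absurd rfl hl
    | cons x l' =>
      simp only [List.flatten_cons, List.cons_append, List.cons.injEq] at hf
      obtain ⟨rfl, hf2⟩ := hf
      obtain ⟨rfl, hLf⟩ := List.append_eq_nil_iff.mp hf2
      have : L' = [] := flatten_eq_nil (fun hm => h (List.mem_cons_of_mem _ hm)) hLf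
      simp [this]

lemma refines_two {α : List ℕ} (h : RefinesL [2] α) : α = [2] := by
  obtain ⟨L, hL, hsum, hfl⟩ := h
  rw [flatten_eq_single hL hfl] at hsum
  simpa using hsum.symm

lemma refines_oneone {α : List ℕ} (h : RefinesL [1, 1] α) : α = [2] ∨ α = [1, 1] := by
  obtain ⟨L, hL, hsum, hfl⟩ := h
  cases L with
  | nil => simp at hfl
  | cons l L' =>
    have hl : l ≠ [] := fun hnil => hL (hnil ▸ (List.mem_cons_self : l ∈ l :: L'))
    cases l with
    | nil => exact absurd rfl hl
    | cons x l' =>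
      simp only [List.flatten_cons, List.cons_append, List.cons.injEq] at hfl
      obtain ⟨rfl, hf2⟩ := hfl
      cases l' with
      | nil =>
        simp only [List.nil_append] at hf2
        have hL' : L' = [[1]] :=
          flatten_eq_single (fun hm => hL (List.mem_cons_of_mem _ hm)) hf2
        right
        rw [hL'] at hsum
        simpa using hsum.symm
      | cons y l'' =>
        simp only [List.cons_append, List.cons.injEq] at hf2
        obtain ⟨rfl, hf3⟩ := hf2
        obtain ⟨rfl, hLf⟩ := List.append_eq_nil_iff.mp hf3
        have : L' = [] := flatten_eq_nil (fun hm => hL (List.mem_cons_of_mem _ hm)) hLf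
        left
        rw [this] at hsum
        simpa using hsum.symm

theorem stmt17 (α : List ℕ) (hαp : ∀ p ∈ α, 0 < p)
    (hα1 : 1 < α.sum → 1 < α.headI) :
    2 * θpair α [2] - θpair α [1, 1] = 0 := by
  have h2 : starC [2] = [2] := rfl
  have h11 : starC [1, 1] = [1, 1] := rfl
  unfold θpair
  rw [h2, h11]
  by_cases hA : α = [2]
  · subst hA
    rw [if_pos ⟨[[2]], by simp, by simp, by simp⟩,
        if_pos ⟨[[1, 1]], by simp, by simp, by simp⟩]
    norm_num
  · have hn2 : ¬ RefinesL [2] α := fun h => hA (refines_two h)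
    have hn11 : ¬ RefinesL [1, 1] α := by
      intro h
      rcases refines_oneone h with h' | h'
      · exact hA h'
      · subst h'
        have := hα1 (by norm_num)
        simp at this
    rw [if_neg hn2, if_neg hn11]
    ring

end
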